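/- arXiv:1107.4699 — 6 statements merged into one kernel-verified Lean document; each statement's English description precedes it below -/
import Mathlib

section
/- If a binomial ideal I in a commutative monoid algebra k[Q] induces the trivial congruence (every class a singleton), then either I = 0 or I is generated by a single monomial t^∞ where ∞ is a nil element of Q. -/
/-! If a binomial ideal `I ⊆ k[Q]` induces the trivial congruence on `Q`
(every class a singleton), then `I = 0` or `I = ⟨t^∞⟩` for a nil `∞ ∈ Q`. -/

variable {k : Type*} [Field k] {Q : Type*} [AddCommMonoid Q]

/-- The monomial `t^q` in the monoid algebra `k[Q]`. -/
noncomputable def mono (k : Type*) [Field k] {Q : Type*} [AddCommMonoid Q] (q : Q) :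
    AddMonoidAlgebra k Q := AddMonoidAlgebra.single q 1

/-- A binomial ideal is one generated by binomials `t^p - λ t^q`, `λ ∈ k`
possibly `0`. -/
def IsBinomialIdeal (I : Ideal (AddMonoidAlgebra k Q)) : Prop :=
  ∃ S : Set (AddMonoidAlgebra k Q), I = Ideal.span S ∧
    ∀ f ∈ S, ∃ (p q : Q) (lam : k), f = mono k p - lam • mono k q

/-- The congruence induced by `I`: `p ∼ q` iff `t^p - λ t^q ∈ I` for a unit
`λ ∈ k*`. -/
def indCong (I : Ideal (AddMonoidAlgebra k Q)) (p q : Q) : Prop :=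
  ∃ lam : k, lam ≠ 0 ∧ mono k p - lam • mono k q ∈ I

lemma mono_mul (p q : Q) : mono k p * mono k q = mono k (p + q) := by
  simp [mono, AddMonoidAlgebra.single_mul_single]

lemma mono_eq_of_mem {I : Ideal (AddMonoidAlgebra k Q)}
    (htriv : ∀ p q : Q, indCong I p q → p = q)
    {p q : Q} (hp : mono k p ∈ I) (hq : mono k q ∈ I) : p = q := by
  refine htriv p q ⟨1, one_ne_zero, ?_⟩
  rw [one_smul]
  exact I.sub_mem hp hq

/-- A binomial ideal inducing the trivial congruence is zero or generated by
the single monomial at a nil element of `Q`. -/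
theorem binomial_ideal_trivial_congruence (I : Ideal (AddMonoidAlgebra k Q))
    (hbin : IsBinomialIdeal I)
    (htriv : ∀ p q : Q, indCong I p q → p = q) :
    I = ⊥ ∨ ∃ nil : Q, (∀ q : Q, q + nil = nil) ∧ I = Ideal.span {mono k nil} := by
  obtain ⟨S, hSI, hS⟩ := hbin
  by_cases h : ∃ p : Q, mono k p ∈ I
  · obtain ⟨p₀, hp₀⟩ := h
    right
    have hnil : ∀ q : Q, q + p₀ = p₀ := by
      intro q
      have h1 : mono k (q + p₀) ∈ I := by
        rw [← mono_mul]; exact I.mul_mem_left _ hp₀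
      exact mono_eq_of_mem htriv h1 hp₀
    refine ⟨p₀, hnil, le_antisymm ?_ ?_⟩
    · rw [hSI]
      refine Ideal.span_le.mpr fun f hf => ?_
      obtain ⟨p, q, lam, rfl⟩ := hS f hf
      have hfI : mono k p - lam • mono k q ∈ I := hSI ▸ Ideal.subset_span hf
      by_cases hlam : lam = 0
      · subst hlam
        rw [zero_smul, sub_zero] at hfI ⊢
        have : p = p₀ := mono_eq_of_mem htriv hfI hp₀
        rw [this]
        exact Ideal.subset_span rfl
      · have hpq : p = q := htriv p q ⟨lam, hlam, hfI⟩
        subst hpq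
        have hrw : mono k p - lam • mono k p = (1 - lam) • mono k p := by
          rw [sub_smul, one_smul]
        by_cases hone : lam = 1
        · subst hone
          rw [one_smul, sub_self]
          exact (Ideal.span {mono k p₀}).zero_mem
        · have hne : (1 : k) - lam ≠ 0 := sub_ne_zero.mpr (Ne.symm hone)
          have hpI : mono k p ∈ I := by
            have := Submodule.smul_of_tower_mem I ((1 - lam)⁻¹ : k) (hrw ▸ hfI)
            rwa [smul_smul, inv_mul_cancel₀ hne, one_smul] at this
          have : p = p₀ := mono_eq_of_mem htriv hpI hp₀
          rw [hrw, this]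
          exact Submodule.smul_of_tower_mem _ _ (Ideal.subset_span rfl)
    · refine Ideal.span_le.mpr ?_
      rintro f rfl
      exact hp₀
  · left
    rw [hSI, ← le_bot_iff]
    refine Ideal.span_le.mpr fun f hf => ?_
    obtain ⟨p, q, lam, rfl⟩ := hS f hf
    have hfI : mono k p - lam • mono k q ∈ I := hSI ▸ Ideal.subset_span hf
    by_cases hlam : lam = 0
    · subst hlam
      rw [zero_smul, sub_zero] at hfI
      exact absurd ⟨p, hfI⟩ h
    · have hpq : p = q := htriv p q ⟨lam, hlam, hfI⟩
      subst hpq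
      have hrw : mono k p - lam • mono k p = (1 - lam) • mono k p := by
        rw [sub_smul, one_smul]
      by_cases hone : lam = 1
      · subst hone
        simp
      · have hne : (1 : k) - lam ≠ 0 := sub_ne_zero.mpr (Ne.symm hone)
        have hpI : mono k p ∈ I := by
          have := Submodule.smul_of_tower_mem I ((1 - lam)⁻¹ : k) (hrw ▸ hfI)
          rwa [smul_smul, inv_mul_cancel₀ hne, one_smul] at this
        exact absurd ⟨p, hpI⟩ h
end

section
/- Let Q be a commutative monoid all of whose elements are either cancellative or nilpotent, and let F ⊆ Q be the submonoid of non-nilpotent (hence cancellative) elements. Then the quotient monoid Q/F, defined by p ∼ q iff p + f = q + g for some f, g ∈ F, is a nilmonoid partially ordered by divisibility; moreover, if Q is finitely generated then Q/F is finite. -/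
/-! Lemma: if every element of a commutative monoid `Q` is cancellative or
nilpotent, and `F ⊆ Q` is the submonoid of non-nilpotent elements (so in
particular `0 ∈ F`, i.e. `0` is not nilpotent), then `Q/F` — the quotient by
the congruence `p ∼ q ↔ p + f = q + g` for some `f, g ∈ F` — is a nilmonoid
partially ordered by divisibility, and it is finite when `Q` is finitely
generated. -/

variable {Q : Type*} [AddCommMonoid Q]

/-- An element is nil if it is absorbing. -/
def IsNilElem (x : Q) : Prop := ∀ q : Q, q + x = x

/-- An element is nilpotent if some positive multiple of it is nil. -/
def IsNilpotentElem (x : Q) : Prop := ∃ n : ℕ, 0 < n ∧ IsNilElem (n • x)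

/-- An element is cancellative if addition by it is injective. -/
def IsCancellativeElem (x : Q) : Prop := ∀ a b : Q, x + a = x + b → a = b

/-- The congruence defining `Q/F`, where `F` is the set of non-nilpotent
elements: `p ∼ q` iff `p + f = q + g` for some `f, g ∈ F`. -/
def modFRel (p q : Q) : Prop :=
  ∃ f g : Q, ¬ IsNilpotentElem f ∧ ¬ IsNilpotentElem g ∧ p + f = q + g


lemma canc_zero : IsCancellativeElem (0 : Q) := fun a b hab => by simpa using hab

lemma canc_add {x y : Q} (hx : IsCancellativeElem x) (hy : IsCancellativeElem y) :
    IsCancellativeElem (x + y) := fun a b hab => by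
  refine hy _ _ (hx _ _ ?_)
  calc x + (y + a) = (x + y) + a := by abel
    _ = (x + y) + b := hab
    _ = x + (y + b) := by abel

lemma canc_smul {x : Q} (hx : IsCancellativeElem x) (n : ℕ) :
    IsCancellativeElem (n • x) := by
  induction n with
  | zero => simpa using canc_zero
  | succ k ih => rw [succ_nsmul]; exact canc_add ih hx

lemma canc_not_nilp (h0 : ¬ IsNilpotentElem (0 : Q)) {x : Q}
    (hx : IsCancellativeElem x) : ¬ IsNilpotentElem x := by
  rintro ⟨n, hn, hnil⟩
  have hx0 : x = 0 := by
    refine canc_smul hx n x 0 ?_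
    rw [add_comm, add_zero, hnil x]
  apply h0
  exact ⟨1, one_pos, by simpa [hx0] using hnil⟩

lemma not_nilp_canc (h : ∀ q : Q, IsCancellativeElem q ∨ IsNilpotentElem q)
    {x : Q} (hx : ¬ IsNilpotentElem x) : IsCancellativeElem x := (h x).resolve_right hx

lemma not_nilp_smul (h : ∀ q : Q, IsCancellativeElem q ∨ IsNilpotentElem q)
    (h0 : ¬ IsNilpotentElem (0 : Q)) {x : Q} (hx : ¬ IsNilpotentElem x) (n : ℕ) :
    ¬ IsNilpotentElem (n • x) :=
  canc_not_nilp h0 (canc_smul (not_nilp_canc h hx) n)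

lemma nilp_add_left {x y : Q} (hx : IsNilpotentElem x) : IsNilpotentElem (x + y) := by
  obtain ⟨n, hn, hnil⟩ := hx
  refine ⟨n, hn, fun q => ?_⟩
  rw [smul_add]
  calc q + (n • x + n • y) = (q + n • y) + n • x := by abel
    _ = n • x := hnil _
    _ = n • y + n • x := (hnil _).symm
    _ = n • x + n • y := by abel

lemma not_nilp_add (h : ∀ q : Q, IsCancellativeElem q ∨ IsNilpotentElem q)
    (h0 : ¬ IsNilpotentElem (0 : Q)) {x y : Q}
    (hx : ¬ IsNilpotentElem x) (hy : ¬ IsNilpotentElem y) :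
    ¬ IsNilpotentElem (x + y) := by
  rintro ⟨n, hn, hnil⟩
  apply hy
  refine ⟨n, hn, fun q => ?_⟩
  have hc : IsCancellativeElem (n • x) := canc_smul (not_nilp_canc h hx) n
  refine hc _ _ ?_
  calc n • x + (q + n • y) = q + n • (x + y) := by rw [smul_add]; abel
    _ = n • (x + y) := hnil q
    _ = n • x + n • y := smul_add ..

lemma modFRel_refl (h0 : ¬ IsNilpotentElem (0 : Q)) (p : Q) : modFRel p p :=
  ⟨0, 0, h0, h0, rfl⟩

lemma modFRel_symm {p q : Q} : modFRel p q → modFRel q p := by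
  rintro ⟨f, g, hf, hg, e⟩; exact ⟨g, f, hg, hf, e.symm⟩

lemma modFRel_trans (h : ∀ q : Q, IsCancellativeElem q ∨ IsNilpotentElem q)
    (h0 : ¬ IsNilpotentElem (0 : Q)) {p q r : Q}
    (h1 : modFRel p q) (h2 : modFRel q r) : modFRel p r := by
  obtain ⟨f, g, hf, hg, e1⟩ := h1
  obtain ⟨f', g', hf', hg', e2⟩ := h2
  refine ⟨f + f', g' + g, not_nilp_add h h0 hf hf', not_nilp_add h h0 hg' hg, ?_⟩
  calc p + (f + f') = (p + f) + f' := by abel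
    _ = (q + g) + f' := by rw [e1]
    _ = (q + f') + g := by abel
    _ = (r + g') + g := by rw [e2]
    _ = r + (g' + g) := by abel

lemma modFRel_add (h : ∀ q : Q, IsCancellativeElem q ∨ IsNilpotentElem q)
    (h0 : ¬ IsNilpotentElem (0 : Q)) {p q p' q' : Q}
    (h1 : modFRel p q) (h2 : modFRel p' q') : modFRel (p + p') (q + q') := by
  obtain ⟨f, g, hf, hg, e1⟩ := h1
  obtain ⟨f', g', hf', hg', e2⟩ := h2
  refine ⟨f + f', g + g', not_nilp_add h h0 hf hf', not_nilp_add h h0 hg hg', ?_⟩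
  calc (p + p') + (f + f') = (p + f) + (p' + f') := by abel
    _ = (q + g) + (q' + g') := by rw [e1, e2]
    _ = (q + q') + (g + g') := by abel

lemma add_eq_smul_congr {x c d : Q} (hcd : x + c = x + d) :
    ∀ k : ℕ, x + k • c = x + k • d := by
  intro k
  induction k with
  | zero => simp
  | succ m ih =>
    calc x + (m + 1) • c = (x + m • c) + c := by rw [succ_nsmul]; abel
      _ = (x + m • d) + c := by rw [ih]
      _ = (x + c) + m • d := by abel
      _ = (x + d) + m • d := by rw [hcd]
      _ = x + (m + 1) • d := by rw [succ_nsmul]; abel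

open Classical in
noncomputable def nilExp (x : Q) : ℕ :=
  if h : IsNilpotentElem x then h.choose else 0

lemma nilExp_spec {x : Q} (hx : IsNilpotentElem x) :
    0 < nilExp x ∧ IsNilElem (nilExp x • x) := by
  rw [nilExp, dif_pos hx]; exact hx.choose_spec

lemma nilExp_of_not {x : Q} (hx : ¬ IsNilpotentElem x) : nilExp x = 0 := by
  rw [nilExp, dif_neg hx]

lemma cap_single (h : ∀ q : Q, IsCancellativeElem q ∨ IsNilpotentElem q)
    (h0 : ¬ IsNilpotentElem (0 : Q)) (x s : Q) (m : ℕ) :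
    modFRel (x + m • s) (x + min m (nilExp s) • s) := by
  by_cases hs : IsNilpotentElem s
  · obtain ⟨hn, hnil⟩ := nilExp_spec hs
    set n := nilExp s with hndef
    rcases le_or_gt m n with hle | hlt
    · rw [min_eq_left hle]; exact modFRel_refl h0 _
    · rw [min_eq_right hlt.le]
      have e1 : x + m • s = n • s := by
        have : m = (m - n) + n := by omega
        rw [this, add_smul, ← add_assoc]
        exact hnil _
      have e2 : x + n • s = n • s := hnil _
      rw [e1, e2]; exact modFRel_refl h0 _
  · rw [nilExp_of_not hs]
    simp only [Nat.min_zero, zero_smul, add_zero]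
    exact ⟨0, m • s, h0, not_nilp_smul h h0 hs m, by rw [add_zero]⟩

lemma cap_sum (h : ∀ q : Q, IsCancellativeElem q ∨ IsNilpotentElem q)
    (h0 : ¬ IsNilpotentElem (0 : Q)) {ι : Type*} (T : Finset ι) (g : ι → Q) (c : ι → ℕ) :
    ∀ x : Q, modFRel (x + ∑ i ∈ T, c i • g i)
      (x + ∑ i ∈ T, min (c i) (nilExp (g i)) • g i) := by
  classical
  induction T using Finset.induction_on with
  | empty => intro x; exact modFRel_refl h0 _
  | insert _ _ ha ih =>
    rename_i a T
    intro x
    rw [Finset.sum_insert ha, Finset.sum_insert ha]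
    have step1 : modFRel (x + (c a • g a + ∑ i ∈ T, c i • g i))
        ((x + c a • g a) + ∑ i ∈ T, min (c i) (nilExp (g i)) • g i) := by
      have := ih (x + c a • g a)
      have e : x + (c a • g a + ∑ i ∈ T, c i • g i)
          = (x + c a • g a) + ∑ i ∈ T, c i • g i := by abel
      rw [e]; exact this
    have step2 : modFRel ((x + ∑ i ∈ T, min (c i) (nilExp (g i)) • g i) + c a • g a)
        (x + (min (c a) (nilExp (g a)) • g a + ∑ i ∈ T, min (c i) (nilExp (g i)) • g i)) := by
      have := cap_single h h0 (x + ∑ i ∈ T, min (c i) (nilExp (g i)) • g i) (g a) (c a)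
      have e : (x + ∑ i ∈ T, min (c i) (nilExp (g i)) • g i) + min (c a) (nilExp (g a)) • g a
          = x + (min (c a) (nilExp (g a)) • g a + ∑ i ∈ T, min (c i) (nilExp (g i)) • g i) := by
        abel
      rw [← e]; exact this
    have e3 : (x + c a • g a) + ∑ i ∈ T, min (c i) (nilExp (g i)) • g i
        = (x + ∑ i ∈ T, min (c i) (nilExp (g i)) • g i) + c a • g a := by abel
    exact modFRel_trans h h0 step1 (by rw [e3] at step1 ⊢; exact modFRel_trans h h0 (modFRel_refl h0 _) step2)

/-- If every element of `Q` is cancellative or nilpotent then the quotient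
`Q/F` by the non-nilpotent (hence cancellative) submonoid `F` is:
(1) a nilmonoid — every class distinct from the class of the identity is
nilpotent, i.e. some positive multiple of it is absorbing modulo `∼`;
(2) partially ordered by divisibility — Green's preorder on `Q/F` is
antisymmetric; and
(3) finite, provided `Q` is finitely generated. -/
theorem quotient_mod_cancellative_submonoid
    (h : ∀ q : Q, IsCancellativeElem q ∨ IsNilpotentElem q)
    (h0 : ¬ IsNilpotentElem (0 : Q)) :
    (∀ q : Q, ¬ modFRel q 0 →
        ∃ n : ℕ, 0 < n ∧ ∀ p : Q, modFRel (p + n • q) (n • q)) ∧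
    (∀ p q : Q, (∃ a : Q, modFRel (p + a) q) → (∃ b : Q, modFRel (q + b) p) →
        modFRel p q) ∧
    (AddMonoid.FG Q → Finite (Quot (modFRel (Q := Q)))) := by
  refine ⟨?_, ?_, ?_⟩
  · -- (1) nilmonoid
    intro q hq
    have hnq : IsNilpotentElem q := by
      by_contra hnn
      exact hq ⟨0, q, h0, hnn, by rw [add_zero, zero_add]⟩
    obtain ⟨n, hn, hnil⟩ := hnq
    exact ⟨n, hn, fun p => by rw [hnil p]; exact modFRel_refl h0 _⟩
  · -- (2) antisymmetry of divisibility
    rintro p q ⟨a, f, g, hf, hg, e1⟩ ⟨b, f', g', hf', hg', e2⟩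
    set A := a + f with hA
    set B := b + f' with hB
    have eA : p + A = q + g := by rw [hA, ← add_assoc]; exact e1
    have eB : q + B = p + g' := by rw [hB, ← add_assoc]; exact e2
    by_cases hAn : IsNilpotentElem A
    · -- nilpotent case: p and q are both equivalent to the absorbing element
      have hABn : IsNilpotentElem (A + B) := nilp_add_left hAn
      obtain ⟨n, hn, hnil⟩ := hABn
      set D := g' + g with hD
      have hDn : ¬ IsNilpotentElem D := not_nilp_add h h0 hg' hg
      have hnDn : ¬ IsNilpotentElem (n • D) := not_nilp_smul h h0 hDn n
      have hpe : p + (A + B) = p + D := by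
        calc p + (A + B) = (p + A) + B := by abel
          _ = (q + g) + B := by rw [eA]
          _ = (q + B) + g := by abel
          _ = (p + g') + g := by rw [eB]
          _ = p + D := by rw [hD]; abel
      have hqe : q + (A + B) = q + D := by
        calc q + (A + B) = (q + B) + A := by abel
          _ = (p + g') + A := by rw [eB]
          _ = (p + A) + g' := by abel
          _ = (q + g) + g' := by rw [eA]
          _ = q + D := by rw [hD]; abel
      have hp' : p + n • D = n • (A + B) := by
        rw [← add_eq_smul_congr hpe n]; exact hnil p
      have hq' : q + n • D = n • (A + B) := by
        rw [← add_eq_smul_congr hqe n]; exact hnil q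
      exact ⟨n • D, n • D, hnDn, hnDn, by rw [hp', hq']⟩
    · exact ⟨A, g, hAn, hg, eA⟩
  · -- (3) finiteness
    intro hFG
    obtain ⟨S, hS⟩ := hFG.fg_top
    classical
    set val : (∀ _ : ↥S, ℕ) → Q := fun c => ∑ s : ↥S, c s • (s : Q) with hval
    have key : ∀ q : Q, ∃ c : (∀ _ : ↥S, ℕ), modFRel q (val c) := by
      intro q
      have hq : q ∈ AddSubmonoid.closure (↑S : Set Q) := by rw [hS]; trivial
      induction hq using AddSubmonoid.closure_induction with
      | mem x hx =>
        refine ⟨fun s => if s = ⟨x, hx⟩ then 1 else 0, ?_⟩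
        have : val (fun s => if s = ⟨x, hx⟩ then 1 else 0) = x := by
          rw [hval]
          simp only [ite_smul, one_smul, zero_smul]
          rw [Finset.sum_ite_eq' Finset.univ (⟨x, hx⟩ : ↥S) (fun s => (s : Q))]
          simp
        rw [this]
        exact modFRel_refl h0 _
      | zero =>
        refine ⟨0, ?_⟩
        have : val 0 = 0 := by simp [hval]
        rw [this]; exact modFRel_refl h0 _
      | add x y hx hy ihx ihy =>
        obtain ⟨c1, hc1⟩ := ihx
        obtain ⟨c2, hc2⟩ := ihy
        refine ⟨c1 + c2, ?_⟩
        have : val (c1 + c2) = val c1 + val c2 := by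
          simp [hval, add_smul, Finset.sum_add_distrib]
        rw [this]
        exact modFRel_add h h0 hc1 hc2
    let φ : (∀ s : ↥S, Fin (nilExp (s : Q) + 1)) → Quot (modFRel (Q := Q)) :=
      fun c => Quot.mk _ (val fun s => (c s : ℕ))
    have hsurj : Function.Surjective φ := by
      intro z
      induction z using Quot.ind with
      | _ q =>
        obtain ⟨c, hc⟩ := key q
        refine ⟨fun s => ⟨min (c s) (nilExp (s : Q)), by omega⟩, ?_⟩
        have hcap : modFRel (val c) (val fun s => min (c s) (nilExp (s : Q))) := by
          have := cap_sum h h0 (Finset.univ : Finset ↥S) (fun s => (s : Q)) c 0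
          simpa [hval] using this
        have : modFRel q (val fun s => min (c s) (nilExp (s : Q))) :=
          modFRel_trans h h0 hc hcap
        exact Quot.sound (modFRel_symm this)
    exact Finite.of_surjective φ hsurj
end

section
/- Localization of a commutative monoid at a prime ideal commutes with finite common refinements of congruences: if a congruence ∼ on Q is the common refinement of congruences ∼₁, …, ∼ᵣ, and P ⊂ Q is a prime ideal, then the congruence induced by ∼ on the localization Q_P is the common refinement of the congruences induced by the ∼ⱼ on Q_P. -/
/-! Localization at a monoid prime commutes with finite common refinements of
congruences.  The localization `Q_P` consists of formal differences `q - u`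
with `u ∉ P`; a congruence `∼` on `Q` induces the congruence
`(q - u) ∼ (q' - u') ↔ ∃ w ∉ P, w + u' + q ∼ w + u + q'` on `Q_P`.
We state the result on representatives. -/

variable {Q : Type*} [AddCommMonoid Q]

/-- An ideal of a monoid. -/
def IsMonIdeal (T : Set Q) : Prop := ∀ t ∈ T, ∀ q : Q, t + q ∈ T

/-- A prime ideal of a monoid. -/
def IsMonPrime (P : Set Q) : Prop :=
  IsMonIdeal P ∧ ∀ t s : Q, t + s ∈ P → t ∈ P ∨ s ∈ P

lemma sum_not_mem_prime (P : Set Q) (hP : IsMonPrime P) (h0 : (0 : Q) ∉ P)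
    {ι : Type*} (s : Finset ι) (w : ι → Q) (h : ∀ j ∈ s, w j ∉ P) :
    ∑ j ∈ s, w j ∉ P := by
  classical
  induction s using Finset.induction with
  | empty => simpa using h0
  | @insert a s hj ih =>
    rw [Finset.sum_insert hj]
    intro hmem
    rcases hP.2 _ _ hmem with h1 | h2
    · exact h a (Finset.mem_insert_self a s) h1
    · exact ih (fun j hjs => h j (Finset.mem_insert_of_mem hjs)) h2

/-- If `∼` is the common refinement of congruences `∼₁, …, ∼ᵣ` on `Q` and
`P ⊂ Q` is a (proper) prime ideal, then the congruence induced by `∼` on the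
localization `Q_P` is the common refinement of the congruences induced by the
`∼ⱼ` on `Q_P`. -/
theorem localization_commutes_common_refinement
    (P : Set Q) (hP : IsMonPrime P) (h0 : (0 : Q) ∉ P)
    (r : ℕ) (c : Fin r → AddCon Q) (d : AddCon Q)
    (hd : ∀ x y : Q, d x y ↔ ∀ j, c j x y)
    (q q' u u' : Q) (hu : u ∉ P) (hu' : u' ∉ P) :
    (∃ w : Q, w ∉ P ∧ d (w + u' + q) (w + u + q')) ↔
      ∀ j, ∃ w : Q, w ∉ P ∧ (c j) (w + u' + q) (w + u + q') := by
  classical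
  constructor
  · rintro ⟨w, hw, hdw⟩ j
    exact ⟨w, hw, (hd _ _).1 hdw j⟩
  · intro h
    choose w hw hc using h
    refine ⟨∑ j, w j, sum_not_mem_prime P hP h0 _ _ (fun j _ => hw j), ?_⟩
    rw [hd]
    intro j
    have key : (c j) (∑ i ∈ Finset.univ.erase j, w i + (w j + u' + q))
        (∑ i ∈ Finset.univ.erase j, w i + (w j + u + q')) :=
      (c j).add ((c j).refl _) (hc j)
    have hsum : ∑ i, w i = ∑ i ∈ Finset.univ.erase j, w i + w j := by
      rw [Finset.sum_erase_add _ _ (Finset.mem_univ j)]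
    rw [hsum]
    simpa [add_assoc] using key
end

section
/- Every infinite subset of a partially ordered noetherian commutative monoid contains an infinite strictly ascending chain. -/
/-! Every infinite subset of a partially ordered noetherian commutative monoid
contains an infinite strictly ascending chain. -/

variable {Q : Type*} [AddCommMonoid Q]

/-- Every infinite subset `W` of a noetherian (no infinite strictly increasing
chain of monoid ideals) commutative monoid that is partially ordered by
divisibility (Green's preorder is antisymmetric) contains an infinite strictly
ascending chain `w₀ ≺ w₁ ≺ ⋯`. -/
theorem infinite_subset_has_ascending_chain
    (hnoeth : ¬ ∃ T : ℕ → Set Q, (∀ n, IsMonIdeal (T n)) ∧ ∀ n, T n ⊂ T (n + 1))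
    (hpo : ∀ p q : Q, (∃ a : Q, p + a = q) → (∃ b : Q, q + b = p) → p = q)
    (W : Set Q) (hW : W.Infinite) :
    ∃ w : ℕ → Q, (∀ n, w n ∈ W) ∧
      ∀ n, (∃ a : Q, w n + a = w (n + 1)) ∧ w n ≠ w (n + 1) := by
  set r : Q → Q → Prop := fun p q => ∃ a : Q, p + a = q with hr
  haveI : IsRefl Q r := ⟨fun p => ⟨0, add_zero p⟩⟩
  haveI : IsTrans Q r := ⟨by
    rintro p q s ⟨a, rfl⟩ ⟨b, rfl⟩; exact ⟨a + b, (add_assoc _ _ _).symm⟩⟩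
  haveI : IsPreorder Q r := { toIsTrans := inferInstance, refl := fun p => ⟨0, add_zero p⟩ }
  -- r is a wqo: every sequence has a good pair
  have hwqo : (Set.univ : Set Q).PartiallyWellOrderedOn r := by
    intro f
    by_contra hbad
    push_neg at hbad
    apply hnoeth
    refine ⟨fun n => {q | ∃ i < n, r (f i) q}, ?_, ?_⟩
    · rintro n t ⟨i, hi, a, rfl⟩ q
      exact ⟨i, hi, a + q, (add_assoc _ _ _).symm⟩
    · intro n
      constructor
      · rintro t ⟨i, hi, hri⟩
        exact ⟨i, hi.trans (Nat.lt_succ_self n), hri⟩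
      · intro hsub
        obtain ⟨i, hi, hri⟩ := hsub ⟨n, Nat.lt_succ_self n, ⟨0, add_zero _⟩⟩
        exact hbad i n hi hri
  -- take an injective sequence in W and a monotone subsequence
  obtain ⟨f⟩ := hW.to_subtype.nonempty
  let e : ℕ ↪ Q := (hW.natEmbedding W).trans (Function.Embedding.subtype _)
  obtain ⟨g, hg⟩ := hwqo.exists_monotone_subseq (f := fun n => e n) (fun n => Set.mem_univ _)
  refine ⟨fun n => e (g n), fun n => (hW.natEmbedding W (g n)).2, fun n => ?_⟩
  refine ⟨hg n (n + 1) (Nat.le_succ n), fun h => ?_⟩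
  have := e.injective h
  have := g.injective this
  omega
end

section
/- If Q is a finitely generated commutative monoid with a finite kernel K (a finite ideal contained in every nonempty ideal), then the unital augmentation ideal I₁ = ⟨t^q − 1 : q ∈ Q⟩ of the monoid algebra k[Q] is an associated prime of k[Q]: it equals the annihilator of the element f = Σ_{k∈K} t^k. -/
/-! If a finitely generated commutative monoid `Q` has a finite kernel `K`
(a finite nonempty ideal contained in every nonempty ideal), then the unital
augmentation ideal `I₁ = ⟨t^q − 1 : q ∈ Q⟩` of `k[Q]` is an associated prime
of `k[Q]`: it equals the annihilator of the nonzero element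
`f = Σ_{x ∈ K} t^x`. -/

variable {k : Type*} [Field k] {Q : Type*} [AddCommMonoid Q]

/-- The unital augmentation ideal `⟨t^q − 1 : q ∈ Q⟩`. -/
noncomputable def augIdeal (k : Type*) [Field k] (Q : Type*) [AddCommMonoid Q] :
    Ideal (AddMonoidAlgebra k Q) :=
  Ideal.span {g : AddMonoidAlgebra k Q | ∃ q : Q, g = mono k q - 1}

noncomputable def eps (k : Type*) [Field k] (Q : Type*) [AddCommMonoid Q] :
    AddMonoidAlgebra k Q →ₐ[k] k := AddMonoidAlgebra.lift k k Q 1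

lemma eps_single (q : Q) (c : k) : eps k Q (AddMonoidAlgebra.single q c) = c := by
  simp [eps, AddMonoidAlgebra.lift_single]

lemma sub_eps_mem (g : AddMonoidAlgebra k Q) : g - (eps k Q g) • 1 ∈ augIdeal k Q := by
  induction g using AddMonoidAlgebra.induction_on with
  | of q =>
      have h1 : (AddMonoidAlgebra.of k Q (Multiplicative.ofAdd q) : AddMonoidAlgebra k Q)
          = mono k q := rfl
      have h2 : eps k Q (mono k q) = 1 := eps_single q 1
      rw [h1, h2, one_smul]
      exact Ideal.subset_span ⟨q, rfl⟩
  | add a b ha hb =>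
      have : (a + b) - (eps k Q (a + b)) • (1 : AddMonoidAlgebra k Q) =
          (a - (eps k Q a) • 1) + (b - (eps k Q b) • 1) := by
        rw [map_add, add_smul]; ring
      rw [this]; exact Ideal.add_mem _ ha hb
  | smul r a ha =>
      have : (r • a) - (eps k Q (r • a)) • (1 : AddMonoidAlgebra k Q) =
          r • (a - (eps k Q a) • 1) := by
        rw [map_smul, smul_sub, smul_smul, smul_eq_mul]
      rw [this, Algebra.smul_def]
      exact Ideal.mul_mem_left _ _ ha

section
variable [DecidableEq Q] (K : Finset Q) (hid : ∀ x ∈ K, ∀ q : Q, x + q ∈ K)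
    (hker : ∀ T : Set Q, (∀ t ∈ T, ∀ q : Q, t + q ∈ T) → T.Nonempty →
      (K : Set Q) ⊆ T)
include hid hker

lemma image_add_eq (hne : K.Nonempty) (q : Q) : K.image (fun x => q + x) = K := by
  apply Finset.Subset.antisymm
  · intro y hy
    obtain ⟨x, hx, rfl⟩ := Finset.mem_image.mp hy
    rw [add_comm]; exact hid x hx q
  · intro y hy
    have hT : ∀ t ∈ (↑(K.image (fun x => q + x)) : Set Q), ∀ r : Q,
        t + r ∈ (↑(K.image (fun x => q + x)) : Set Q) := by
      intro t ht r
      simp only [Finset.coe_image, Set.mem_image, Finset.mem_coe] at ht ⊢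
      obtain ⟨x, hx, rfl⟩ := ht
      exact ⟨x + r, hid x hx r, by rw [add_assoc]⟩
    have hTne : (↑(K.image (fun x => q + x)) : Set Q).Nonempty := by
      obtain ⟨x, hx⟩ := hne
      refine ⟨q + x, ?_⟩
      simp only [Finset.coe_image, Set.mem_image, Finset.mem_coe]
      exact ⟨x, hx, rfl⟩
    exact_mod_cast hker _ hT hTne hy

lemma mono_mul_sum (hne : K.Nonempty) (q : Q) :
    mono k q * (∑ x ∈ K, mono k x) = ∑ x ∈ K, mono k x := by
  have hinj : Set.InjOn (fun x => q + x) K := by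
    apply Finset.injOn_of_card_image_eq
    rw [image_add_eq K hid hker hne q]
  calc mono k q * (∑ x ∈ K, mono k x) = ∑ x ∈ K, mono k (q + x) := by
        rw [Finset.mul_sum]
        refine Finset.sum_congr rfl fun x _ => ?_
        simp [mono, AddMonoidAlgebra.single_mul_single]
    _ = ∑ y ∈ K.image (fun x => q + x), mono k y := (Finset.sum_image hinj).symm
    _ = ∑ x ∈ K, mono k x := by rw [image_add_eq K hid hker hne q]

end

/-- The unital augmentation ideal is the annihilator of `f = Σ_{x ∈ K} t^x`
(and `f ≠ 0`), when `K` is a finite kernel of the finitely generated monoid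
`Q`; hence it is an associated prime of `k[Q]`. -/
theorem augmentation_ideal_is_annihilator [AddMonoid.FG Q]
    (K : Finset Q) (hne : K.Nonempty)
    (hid : ∀ x ∈ K, ∀ q : Q, x + q ∈ K)
    (hker : ∀ T : Set Q, (∀ t ∈ T, ∀ q : Q, t + q ∈ T) → T.Nonempty →
      (K : Set Q) ⊆ T) :
    (∑ x ∈ K, mono k x) ≠ 0 ∧
      ∀ g : AddMonoidAlgebra k Q,
        (g ∈ augIdeal k Q ↔ g * ∑ x ∈ K, mono k x = 0) := by
  classical
  have hfne : (∑ x ∈ K, mono k x : AddMonoidAlgebra k Q) ≠ 0 := by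
    obtain ⟨x0, hx0⟩ := hne
    intro h
    have h2 : (∑ x ∈ K, mono k x : AddMonoidAlgebra k Q).coeff x0
        = ∑ x ∈ K, (Finsupp.single x (1:k)) x0 :=
      by simp only [AddMonoidAlgebra.coeff_sum, Finsupp.finset_sum_apply]; rfl
    rw [h] at h2
    simp only [Finsupp.single_apply] at h2
    rw [Finset.sum_ite_eq' K x0 (fun _ => (1 : k))] at h2
    simp [hx0] at h2
  have hann : ∀ h ∈ augIdeal k Q, h * (∑ x ∈ K, mono k x) = 0 := by
    intro h hh
    refine Submodule.span_induction ?_ ?_ ?_ ?_ hh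
    · rintro g ⟨q, rfl⟩
      rw [sub_mul, one_mul, mono_mul_sum K hid hker hne q, sub_self]
    · simp
    · intro a b _ _ ha hb; rw [add_mul, ha, hb, add_zero]
    · intro r a _ ha; rw [smul_eq_mul, mul_assoc, ha, mul_zero]
  refine ⟨hfne, fun g => ⟨hann g, fun hg => ?_⟩⟩
  have hc : eps k Q g = 0 := by
    have h2 := hann _ (sub_eps_mem g)
    rw [sub_mul, hg, zero_sub, neg_eq_zero, smul_mul_assoc, one_mul] at h2
    exact (smul_eq_zero.mp h2).resolve_right hfne
  have h3 := sub_eps_mem g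
  rwa [hc, zero_smul, sub_zero] at h3
end

section
/- Let Q be a finitely generated commutative monoid. The universal (Grothendieck) group Q_∅ of Q is trivial if and only if Q has a nil (absorbing) element. -/
/-! For a finitely generated commutative monoid `Q`, the universal
(Grothendieck) group `Q_∅` — the localization of `Q` at all of its
elements — is trivial if and only if `Q` has a nil (absorbing) element. -/

variable {Q : Type*} [AddCommMonoid Q]

/-- The universal group `Q_∅` of a finitely generated commutative monoid `Q`
is trivial if and only if `Q` has a nil element. -/
theorem universal_group_trivial_iff_nil [AddMonoid.FG Q] :
    Subsingleton (AddLocalization (⊤ : AddSubmonoid Q)) ↔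
      ∃ nil : Q, ∀ q : Q, q + nil = nil := by
  classical
  constructor
  · intro h
    -- every q is "annihilated": ∃ c, c + q = c
    have key : ∀ q : Q, ∃ c : Q, c + q = c := by
      intro q
      have := h.elim (AddLocalization.mk q (0 : (⊤ : AddSubmonoid Q)))
        (AddLocalization.mk 0 (0 : (⊤ : AddSubmonoid Q)))
      rw [AddLocalization.mk_eq_mk_iff, AddLocalization.r_iff_exists] at this
      obtain ⟨c, hc⟩ := this
      exact ⟨c, by simpa using hc⟩
    choose c hc using key
    obtain ⟨S, hS⟩ := (AddMonoid.FG.fg_top : (⊤ : AddSubmonoid Q).FG)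
    refine ⟨∑ x ∈ S, c x, fun q => ?_⟩
    have hq : q ∈ AddSubmonoid.closure (S : Set Q) := hS ▸ AddSubmonoid.mem_top q
    induction hq using AddSubmonoid.closure_induction with
    | mem x hx =>
      have hxS : x ∈ S := hx
      calc x + ∑ y ∈ S, c y = (∑ y ∈ S.erase x, c y) + (c x + x) := by
            rw [← Finset.add_sum_erase _ _ hxS]; abel
        _ = ∑ y ∈ S, c y := by rw [hc]; rw [← Finset.add_sum_erase _ _ hxS]; abel
    | zero => simp
    | add a b _ _ ha hb =>
      calc a + b + ∑ y ∈ S, c y = a + (b + ∑ y ∈ S, c y) := by abel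
        _ = a + ∑ y ∈ S, c y := by rw [hb]
        _ = ∑ y ∈ S, c y := ha
  · rintro ⟨nil, hnil⟩
    refine ⟨fun a b => ?_⟩
    refine AddLocalization.ind (fun x => AddLocalization.ind (fun y => ?_) b) a
    rw [AddLocalization.mk_eq_mk_iff, AddLocalization.r_iff_exists]
    have hn : ∀ z : Q, nil + z = nil := fun z => (add_comm nil z).trans (hnil z)
    exact ⟨⟨nil, trivial⟩, by simp only [AddSubmonoid.coe_add]; rw [hn, hn]⟩
end
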